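/- arXiv:1210.6568 — 2 statements merged into one kernel-verified Lean document; each statement's English description precedes it below -/
import Mathlib

section
/- Let G be an equitably k-colorable graph on n vertices with k dividing n, and let H be an r-partite graph with r ≤ k−1. Then for every l ≥ 1, χ_=(G ∘^l H) ≤ k. -/
open SimpleGraph Finset

/-- The corona `G ∘ H` of two graphs: one copy of `G` and `|V(G)|` copies of `H`,
the `i`-th vertex of `G` being joined to every vertex of the `i`-th copy of `H`. -/
def SimpleGraph.corona {α β : Type*} (G : SimpleGraph α) (H : SimpleGraph β) :
    SimpleGraph (α ⊕ α × β) where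
  Adj x y :=
    match x, y with
    | Sum.inl u, Sum.inl v => G.Adj u v
    | Sum.inl u, Sum.inr (v, _) => u = v
    | Sum.inr (u, _), Sum.inl v => u = v
    | Sum.inr (u, a), Sum.inr (v, b) => u = v ∧ H.Adj a b
  symm := by
    refine ⟨?_⟩
    rintro (u | ⟨u, a⟩) (v | ⟨v, b⟩) h
    · exact h.symm
    · exact h.symm
    · exact h.symm
    · exact ⟨h.1.symm, h.2.symm⟩
  loopless := by
    refine ⟨?_⟩
    rintro (u | ⟨u, a⟩) h
    · exact G.loopless.irrefl u h
    · exact H.loopless.irrefl a h.2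

universe u

/-- Vertex type of the `l`-fold corona `G ∘^l H` (with `l = 0` giving `G` itself). -/
def coronaType (α β : Type u) : ℕ → Type u
  | 0 => α
  | l + 1 => coronaType α β l ⊕ coronaType α β l × β

instance coronaType.fintype (α β : Type u) [Fintype α] [Fintype β] :
    ∀ l, Fintype (coronaType α β l)
  | 0 => inferInstanceAs (Fintype α)
  | l + 1 =>
    letI := coronaType.fintype α β l
    inferInstanceAs (Fintype (coronaType α β l ⊕ coronaType α β l × β))

/-- The `l`-fold corona `G ∘^l H`, defined by `G ∘^0 H = G` and
`G ∘^(l+1) H = (G ∘^l H) ∘ H`. -/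
def coronaPow {α β : Type u} (G : SimpleGraph α) (H : SimpleGraph β) :
    ∀ l, SimpleGraph (coronaType α β l)
  | 0 => G
  | l + 1 => (coronaPow G H l).corona H

/-- The canonical copy of a vertex of `G` inside `G ∘^l H`. -/
def coronaBase {α : Type u} (β : Type u) : ∀ l, α → coronaType α β l
  | 0 => id
  | l + 1 => fun a => Sum.inl (coronaBase β l a)

/-- `c` is an equitable `k`-coloring of `G`: it is proper and any two color classes
differ in size by at most one. -/
def SimpleGraph.IsEquitableColoring {V : Type*} [Fintype V] (G : SimpleGraph V) {k : ℕ}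
    (c : V → Fin k) : Prop :=
  (∀ ⦃u v⦄, G.Adj u v → c u ≠ c v) ∧
    ∀ i j : Fin k,
      (Finset.univ.filter fun v => c v = i).card ≤
        (Finset.univ.filter fun v => c v = j).card + 1

/-- `G` is equitably `k`-colorable. -/
def SimpleGraph.EquitablyColorable {V : Type*} [Fintype V] (G : SimpleGraph V) (k : ℕ) : Prop :=
  ∃ c : V → Fin k, G.IsEquitableColoring c

/-- The equitable chromatic number: the least `k` such that `G` is equitably `k`-colorable. -/
noncomputable def SimpleGraph.equitableChromaticNumber {V : Type*} [Fintype V]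
    (G : SimpleGraph V) : ℕ :=
  sInf {k | G.EquitablyColorable k}

/-- The maximum degree of a finite graph (no decidability assumptions). -/
noncomputable def SimpleGraph.maxDeg {V : Type*} [Fintype V] (G : SimpleGraph V) : ℕ :=
  Finset.univ.sup fun v => (G.neighborSet v).ncard

lemma classes_eq_of_equitable {k m : ℕ} (a : Fin k → ℕ)
    (h : ∀ i j, a i ≤ a j + 1) (hsum : ∑ i, a i = k * m) : ∀ i, a i = m := by
  have hle : ∀ i, a i ≤ m := by
    intro i
    by_contra hi
    push_neg at hi
    have hall : ∀ j, m ≤ a j := fun j => by have := h i j; omega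
    have hlt : ∑ _j : Fin k, m < ∑ j : Fin k, a j :=
      Finset.sum_lt_sum (fun j _ => hall j) ⟨i, Finset.mem_univ i, hi⟩
    rw [Finset.sum_const, Finset.card_univ, Fintype.card_fin, smul_eq_mul, hsum] at hlt
    omega
  intro i
  refine (Finset.sum_eq_sum_iff_of_le (fun j _ => hle j)).mp ?_ i (Finset.mem_univ i)
  rw [hsum, Finset.sum_const, Finset.card_univ, Fintype.card_fin, smul_eq_mul]

lemma aux_corona_coloring {α β : Type} [Fintype α] [Fintype β]
    (G : SimpleGraph α) (H : SimpleGraph β) {k m : ℕ} [NeZero k]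
    (c : α → Fin k) (hc : ∀ ⦃u v⦄, G.Adj u v → c u ≠ c v)
    (hm : ∀ j, (Finset.univ.filter fun v => c v = j).card = m)
    (d : β → Fin k) (hd : ∀ ⦃a b⦄, H.Adj a b → d a ≠ d b)
    (hd1 : ∀ a, d a + 1 ≠ 0) :
    ∃ c' : (α ⊕ α × β) → Fin k,
      (∀ ⦃u v⦄, (G.corona H).Adj u v → c' u ≠ c' v) ∧
      ∀ j, (Finset.univ.filter fun v => c' v = j).card = m * (1 + Fintype.card β) := by
  classical
  refine ⟨Sum.elim c (fun p => c p.1 + (d p.2 + 1)), ?_, ?_⟩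
  · rintro (u | ⟨u, a⟩) (v | ⟨v, b⟩) hadj
    · exact hc hadj
    · obtain rfl : u = v := hadj
      simp only [Sum.elim_inl, Sum.elim_inr]
      intro hcontra
      exact hd1 b (left_eq_add.mp hcontra)
    · obtain rfl : u = v := hadj
      simp only [Sum.elim_inl, Sum.elim_inr]
      intro hcontra
      exact hd1 a (left_eq_add.mp hcontra.symm)
    · obtain ⟨rfl, hab⟩ := hadj
      simp only [Sum.elim_inr]
      intro hcontra
      exact hd hab (add_right_cancel (add_left_cancel hcontra))
  · intro j
    rw [Finset.card_filter, Fintype.sum_sum_type]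
    have h1 : (∑ u : α, if Sum.elim c (fun p : α × β => c p.1 + (d p.2 + 1)) (Sum.inl u) = j
        then 1 else 0) = m := by
      show (∑ u : α, if c u = j then 1 else 0) = m
      rw [← Finset.card_filter, hm]
    have h2 : (∑ p : α × β, if Sum.elim c (fun p : α × β => c p.1 + (d p.2 + 1)) (Sum.inr p) = j
        then 1 else 0) = m * Fintype.card β := by
      show (∑ p : α × β, if c p.1 + (d p.2 + 1) = j then 1 else 0) = m * Fintype.card β
      rw [Fintype.sum_prod_type]
      have inner : ∀ u : α, (∑ b : β, if c u + (d b + 1) = j then 1 else 0)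
          = (Finset.univ.filter fun b => d b = j - c u - 1).card := by
        intro u
        rw [Finset.card_filter]
        refine Finset.sum_congr rfl fun b _ => ?_
        congr 1
        rw [eq_iff_iff]
        constructor
        · intro h; rw [← h]; abel
        · intro h; rw [h]; abel
      simp only [inner]
      -- sum over u of a function of c u
      have step : (∑ u : α, (Finset.univ.filter fun b => d b = j - c u - 1).card)
          = ∑ i : Fin k, ∑ u ∈ Finset.univ.filter (fun u => c u = i),
              (Finset.univ.filter fun b => d b = j - c u - 1).card := by
        rw [Finset.sum_fiberwise]
      rw [step]
      have step2 : ∀ i : Fin k, (∑ u ∈ Finset.univ.filter (fun u => c u = i),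
          (Finset.univ.filter fun b => d b = j - c u - 1).card)
          = m * (Finset.univ.filter fun b => d b = j - i - 1).card := by
        intro i
        rw [Finset.sum_congr rfl (fun u hu => by
          rw [(Finset.mem_filter.mp hu).2]), Finset.sum_const, hm, smul_eq_mul]
      simp only [step2]
      rw [← Finset.mul_sum]
      congr 1
      have bij : (∑ i : Fin k, (Finset.univ.filter fun b => d b = j - i - 1).card)
          = ∑ t : Fin k, (Finset.univ.filter fun b => d b = t).card := by
        refine Fintype.sum_bijective (fun i => j - i - 1) ?_ _ _ (fun i => rfl)
        have : (fun i : Fin k => j - i - 1) = fun i => (j - 1) - i := by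
          funext i; abel
        rw [this]
        exact (Equiv.subLeft (j - 1)).bijective
      rw [bij, ← Finset.card_eq_sum_card_fiberwise (fun b _ => Finset.mem_univ (d b)),
        Finset.card_univ]
    rw [h1, h2]; ring

/-- If `G` is equitably `k`-colorable on `n` vertices with `k ∣ n`, and `H`
is `r`-partite with `r ≤ k-1`, then `χ₌(G ∘^l H) ≤ k` for all `l ≥ 1`. -/
theorem equitableChromaticNumber_coronaPow_rpartite
    {α β : Type} [Fintype α] [Fintype β] (G : SimpleGraph α) (H : SimpleGraph β)
    (k n r l : ℕ) (hn : Fintype.card α = n) (hG : G.EquitablyColorable k) (hdvd : k ∣ n)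
    (hr : r ≤ k - 1) (hH : H.Colorable r) (hl : 1 ≤ l) :
    (coronaPow G H l).equitableChromaticNumber ≤ k := by
  classical
  rcases Nat.eq_zero_or_pos k with hk0 | hkpos
  · subst hk0
    obtain ⟨c, -, -⟩ := hG
    haveI : IsEmpty α := Function.isEmpty c
    have hemp : ∀ l, IsEmpty (coronaType α β l) := by
      intro l
      induction l with
      | zero => exact ‹IsEmpty α›
      | succ l ih =>
        haveI := ih
        exact inferInstanceAs (IsEmpty (coronaType α β l ⊕ coronaType α β l × β))
    apply Nat.sInf_le
    refine ⟨fun v => ((hemp l).elim v), ?_, ?_⟩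
    · intro u v _ _
      exact (hemp l).elim u
    · intro i
      exact i.elim0
  · haveI : NeZero k := ⟨hkpos.ne'⟩
    obtain ⟨c, hc, heq⟩ := hG
    set m := n / k with hmdef
    have hsum : ∑ i : Fin k, (Finset.univ.filter fun v => c v = i).card = k * m := by
      rw [← Finset.card_eq_sum_card_fiberwise (fun v _ => Finset.mem_univ (c v)),
        Finset.card_univ, hn, Nat.mul_div_cancel' hdvd]
    have hm : ∀ j, (Finset.univ.filter fun v => c v = j).card = m :=
      classes_eq_of_equitable _ heq hsum
    obtain ⟨dr⟩ := hH
    have hrk : r ≤ k := le_trans hr (Nat.sub_le k 1)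
    set d : β → Fin k := fun b => Fin.castLE hrk (dr b) with hddef
    have hd : ∀ ⦃a b⦄, H.Adj a b → d a ≠ d b := by
      intro a b hab h
      exact dr.valid hab (Fin.castLE_injective hrk h)
    have hd1 : ∀ a, d a + 1 ≠ 0 := by
      intro a h
      have hvr : (d a).val < r := by simp [hddef]
      have hval : (d a).val < k - 1 := lt_of_lt_of_le hvr hr
      have h2 : (d a + 1).val = 0 := by rw [h]; rfl
      rw [Fin.add_def] at h2
      simp only [Fin.val_one', Fin.val_zero] at h2
      rw [Nat.one_mod_eq_one.mpr (by omega), Nat.mod_eq_of_lt (by omega)] at h2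
      omega
    have main : ∀ l, ∃ c' : coronaType α β l → Fin k,
        (∀ ⦃u v⦄, (coronaPow G H l).Adj u v → c' u ≠ c' v) ∧
        ∀ j, (Finset.univ.filter fun v => c' v = j).card
          = m * (1 + Fintype.card β) ^ l := by
      intro l
      induction l with
      | zero => exact ⟨c, hc, fun j => by rw [pow_zero, mul_one]; exact hm j⟩
      | succ l ih =>
        obtain ⟨c', hc', hm'⟩ := ih
        obtain ⟨c'', hc'', hm''⟩ :=
          aux_corona_coloring (coronaPow G H l) H c' hc' hm' d hd hd1
        refine ⟨c'', hc'', fun j => ?_⟩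
        rw [pow_succ, ← mul_assoc]
        exact hm'' j
    obtain ⟨c', hc', hm'⟩ := main l
    apply Nat.sInf_le
    exact ⟨c', hc', fun i j => by rw [hm' i, hm' j]; omega⟩
end

section
/- Let G be an equitably 3-colorable graph on n ≥ 2 vertices, and let k ≥ 2 and l ≥ 1 be integers. If 3 divides n or k = 2, then χ_=(G ∘^l C_{2k}) = 3. -/
open SimpleGraph Finset

universe u

section Aux

open Finset

namespace EqCorona

/-- Count of vertices of color `j`. -/
def cnt {V : Type*} [Fintype V] (c : V → Fin 3) (j : Fin 3) : ℕ :=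
  (Finset.univ.filter fun v => c v = j).card

lemma cnt_le_card {V : Type*} [Fintype V] (c : V → Fin 3) (j : Fin 3) :
    cnt c j ≤ Fintype.card V := by
  classical
  simpa [cnt, Finset.card_univ] using Finset.card_filter_le Finset.univ (fun v => c v = j)

lemma sum_cnt {V : Type*} [Fintype V] (c : V → Fin 3) :
    cnt c 0 + cnt c 1 + cnt c 2 = Fintype.card V := by
  classical
  have h := Finset.card_eq_sum_card_fiberwise
    (f := c) (s := (Finset.univ : Finset V)) (t := (Finset.univ : Finset (Fin 3)))
    (fun x _ => Finset.mem_univ (c x))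
  rw [Finset.card_univ] at h
  rw [h, Fin.sum_univ_three]
  rfl

/-- parity map into `Fin 3`. -/
def par {m : ℕ} (a : Fin m) : Fin 3 := if a.val % 2 = 0 then 0 else 1

lemma par01 {m : ℕ} (a : Fin m) : par a = 0 ∨ par a = 1 := by
  unfold par; split <;> simp

lemma fin3_aux1 : ∀ i e : Fin 3, e = 0 ∨ e = 1 → i + 1 + e ≠ i := by decide

lemma fin3_aux2 : ∀ i j x : Fin 3, (i + 1 + x = j ↔ x = j - (i + 1)) := by decide

lemma fin3_aux3 : ∀ i j : Fin 3, i ≠ j → (j - (i + 1) = 0 ∨ j - (i + 1) = 1) := by decide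

lemma range_parity (k r : ℕ) (hr : r < 2) :
    ((Finset.range (2 * k)).filter fun m => m % 2 = r).card = k := by
  induction k with
  | zero => simp
  | succ k ih =>
    have h2 : 2 * (k + 1) = (2 * k + 1) + 1 := by ring
    have hm0 : (2 * k) ∉ (Finset.range (2 * k)).filter fun m => m % 2 = r := by
      simp only [Finset.mem_filter, Finset.mem_range]; omega
    have hm1 : (2 * k + 1) ∉ (Finset.range (2 * k)).filter fun m => m % 2 = r := by
      simp only [Finset.mem_filter, Finset.mem_range]; omega
    rw [h2, Finset.range_add_one, Finset.filter_insert]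
    interval_cases r
    · rw [if_neg (by omega), Finset.range_add_one, Finset.filter_insert, if_pos (by omega),
        Finset.card_insert_of_notMem hm0, ih]
    · rw [if_pos (by omega), Finset.range_add_one, Finset.filter_insert, if_neg (by omega),
        Finset.card_insert_of_notMem hm1, ih]

lemma fin_parity (k r : ℕ) (hr : r < 2) :
    (Finset.univ.filter fun a : Fin (2 * k) => a.val % 2 = r).card = k := by
  rw [Finset.card_filter,
    Fin.sum_univ_eq_sum_range (fun m => if m % 2 = r then 1 else 0) (2 * k),
    ← Finset.card_filter]
  exact range_parity k r hr

lemma par_count (k : ℕ) (e : Fin 3) (he : e = 0 ∨ e = 1) :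
    (Finset.univ.filter fun a : Fin (2 * k) => par a = e).card = k := by
  rcases he with rfl | rfl
  · have h : ∀ a : Fin (2 * k), (par a = 0) ↔ a.val % 2 = 0 := by
      intro a; unfold par; split <;> simp_all
    rw [show (Finset.univ.filter fun a : Fin (2 * k) => par a = 0)
        = Finset.univ.filter fun a : Fin (2 * k) => a.val % 2 = 0 from by
      ext a; simp [h a]]
    exact fin_parity k 0 (by omega)
  · have h : ∀ a : Fin (2 * k), (par a = 1) ↔ a.val % 2 = 1 := by
      intro a; unfold par; split <;> simp_all
    rw [show (Finset.univ.filter fun a : Fin (2 * k) => par a = 1)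
        = Finset.univ.filter fun a : Fin (2 * k) => a.val % 2 = 1 from by
      ext a; simp [h a]]
    exact fin_parity k 1 (by omega)

lemma inner_count (k : ℕ) (i j : Fin 3) :
    (Finset.univ.filter fun a : Fin (2 * k) => i + 1 + par a = j).card
      = if i = j then 0 else k := by
  split_ifs with hij
  · subst hij
    rw [Finset.filter_false_of_mem (fun a _ => fin3_aux1 i (par a) (par01 a)),
      Finset.card_empty]
  · rw [show (Finset.univ.filter fun a : Fin (2 * k) => i + 1 + par a = j)
        = Finset.univ.filter fun a : Fin (2 * k) => par a = j - (i + 1) from by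
      ext a; simp [fin3_aux2 i j (par a)]]
    exact par_count k _ (fin3_aux3 i j hij)

lemma cycle_parity_aux {n : ℕ} (a b : Fin n) (h : (a - b).val = 1) (hn : n % 2 = 0) :
    a.val % 2 ≠ b.val % 2 := by
  rw [Fin.sub_def] at h
  have h' : ((n - b.val) + a.val) % n = 1 := h
  have ha := a.isLt
  have hb := b.isLt
  rcases Nat.lt_or_ge ((n - b.val) + a.val) n with h1 | h1
  · rw [Nat.mod_eq_of_lt h1] at h'
    omega
  · rw [Nat.mod_eq_sub_mod h1, Nat.mod_eq_of_lt (by omega)] at h'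
    omega

lemma cycle_parity {m : ℕ} {u v : Fin (2 * m)}
    (h : (SimpleGraph.cycleGraph (2 * m)).Adj u v) : u.val % 2 ≠ v.val % 2 := by
  rw [SimpleGraph.cycleGraph_adj'] at h
  rcases h with h | h
  · exact cycle_parity_aux u v h (by omega)
  · exact (cycle_parity_aux v u h (by omega)).symm

end EqCorona

end Aux

namespace EqCorona

open Finset

lemma corona_step {V : Type} [Fintype V] (G' : SimpleGraph V) (k : ℕ)
    (c : V → Fin 3) (hc : ∀ ⦃u v⦄, G'.Adj u v → c u ≠ c v) :
    ∃ c' : V ⊕ V × Fin (2 * k) → Fin 3,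
      (∀ ⦃x y⦄, (G'.corona (SimpleGraph.cycleGraph (2 * k))).Adj x y → c' x ≠ c' y) ∧
      ∀ j, cnt c' j = cnt c j + k * (Fintype.card V - cnt c j) := by
  classical
  refine ⟨Sum.elim c (fun p => c p.1 + 1 + par p.2), ?_, ?_⟩
  · rintro (u | ⟨u, a⟩) (v | ⟨v, b⟩) hadj
    · exact hc hadj
    · obtain rfl : u = v := hadj
      simp only [Sum.elim_inl, Sum.elim_inr]
      exact (fin3_aux1 (c u) (par b) (par01 b)).symm
    · obtain rfl : u = v := hadj
      simp only [Sum.elim_inl, Sum.elim_inr]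
      exact fin3_aux1 (c u) (par a) (par01 a)
    · obtain ⟨rfl, hab⟩ : u = v ∧ (SimpleGraph.cycleGraph (2 * k)).Adj a b := hadj
      simp only [Sum.elim_inr]
      intro hEq
      have hpar : par a = par b := by
        have := add_left_cancel hEq
        exact this
      have hne := cycle_parity hab
      unfold par at hpar
      by_cases ha : a.val % 2 = 0 <;> by_cases hb : b.val % 2 = 0 <;>
        simp [ha, hb] at hpar <;> omega
  · intro j
    have hsum : cnt (Sum.elim c (fun p : V × Fin (2 * k) => c p.1 + 1 + par p.2)) j
        = (Finset.univ.filter fun v : V => c v = j).card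
          + ∑ v : V,
            (Finset.univ.filter fun a : Fin (2 * k) => c v + 1 + par a = j).card := by
      rw [cnt, Finset.card_filter, Fintype.sum_sum_type]
      simp only [Sum.elim_inl, Sum.elim_inr]
      congr 1
      · exact (Finset.card_filter _ _).symm
      · rw [Fintype.sum_prod_type]
        exact Finset.sum_congr rfl fun v _ => (Finset.card_filter _ _).symm
    rw [hsum]
    rw [Finset.sum_congr rfl fun v (_ : v ∈ Finset.univ) => inner_count k (c v) j]
    have h2 : ∑ v : V, (if c v = j then 0 else k)
        = (Finset.univ.filter fun v : V => ¬(c v = j)).card * k := by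
      calc ∑ v : V, (if c v = j then 0 else k)
          = ∑ v ∈ Finset.univ.filter (fun v : V => ¬(c v = j)), k := by
            rw [Finset.sum_filter]
            exact Finset.sum_congr rfl fun v _ => by by_cases h : c v = j <;> simp [h]
        _ = (Finset.univ.filter fun v : V => ¬(c v = j)).card * k := by
            rw [Finset.sum_const, smul_eq_mul]
    rw [h2, Finset.filter_not, Finset.card_sdiff_of_subset (Finset.filter_subset _ _),
      Finset.card_univ]
    rw [Nat.mul_comm]
    rfl

lemma caseA {α : Type} [Fintype α] (G : SimpleGraph α) (k : ℕ)
    (c0 : α → Fin 3) (h0 : ∀ ⦃u v⦄, G.Adj u v → c0 u ≠ c0 v)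
    (a : ℕ) (hbal : ∀ j, cnt c0 j = a) :
    ∀ l, ∃ (c : coronaType α (Fin (2 * k)) l → Fin 3) (b : ℕ),
      (∀ ⦃u v⦄, (coronaPow G (SimpleGraph.cycleGraph (2 * k)) l).Adj u v → c u ≠ c v) ∧
        ∀ j, cnt c j = b
  | 0 => ⟨c0, a, h0, hbal⟩
  | l + 1 => by
    obtain ⟨c, b, hcp, hb⟩ := caseA G k c0 h0 a hbal l
    obtain ⟨c', hc', hcnt⟩ :=
      corona_step (coronaPow G (SimpleGraph.cycleGraph (2 * k)) l) k c hcp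
    exact ⟨c', b + k * (Fintype.card (coronaType α (Fin (2 * k)) l) - b), hc',
      fun j => by have := hcnt j; rw [hb j] at this; exact this⟩

lemma caseB {α : Type} [Fintype α] (G : SimpleGraph α)
    (c0 : α → Fin 3) (h0 : ∀ ⦃u v⦄, G.Adj u v → c0 u ≠ c0 v)
    (heq : ∀ i j, cnt c0 i ≤ cnt c0 j + 1) :
    ∀ l, ∃ c : coronaType α (Fin (2 * 2)) l → Fin 3,
      (∀ ⦃u v⦄, (coronaPow G (SimpleGraph.cycleGraph (2 * 2)) l).Adj u v → c u ≠ c v) ∧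
        ∀ i j, cnt c i ≤ cnt c j + 1
  | 0 => ⟨c0, h0, heq⟩
  | l + 1 => by
    obtain ⟨c, hcp, hce⟩ := caseB G c0 h0 heq l
    obtain ⟨c', hc', hcnt⟩ :=
      corona_step (coronaPow G (SimpleGraph.cycleGraph (2 * 2)) l) 2 c hcp
    refine ⟨c', hc', fun i j => ?_⟩
    show cnt (V := coronaType α (Fin (2 * 2)) l ⊕ coronaType α (Fin (2 * 2)) l × Fin (2 * 2)) c' i
      ≤ cnt (V := coronaType α (Fin (2 * 2)) l ⊕ coronaType α (Fin (2 * 2)) l × Fin (2 * 2)) c' j + 1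
    rw [hcnt i, hcnt j]
    have hi := cnt_le_card c i
    have hj := cnt_le_card c j
    have := hce j i
    omega

end EqCorona

open EqCorona in
/-- If `G` is equitably 3-colorable on `n ≥ 2` vertices, `k ≥ 2`, `l ≥ 1`,
and `3 ∣ n` or `k = 2`, then `χ₌(G ∘^l C_{2k}) = 3`. -/
theorem equitableChromaticNumber_coronaPow_evenCycle_eq_three
    {α : Type} [Fintype α] (G : SimpleGraph α) (n k l : ℕ)
    (hn : Fintype.card α = n) (hn2 : 2 ≤ n) (hG : G.EquitablyColorable 3)
    (hk : 2 ≤ k) (hl : 1 ≤ l) (h : 3 ∣ n ∨ k = 2) :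
    (coronaPow G (cycleGraph (2 * k)) l).equitableChromaticNumber = 3 := by
  classical
  obtain ⟨c0, h0prop, h0eq⟩ := hG
  have hmem : (coronaPow G (cycleGraph (2 * k)) l).EquitablyColorable 3 := by
    rcases h with h3 | hk2
    · -- balanced case
      have hsum : cnt c0 0 + cnt c0 1 + cnt c0 2 = n := by rw [← hn]; exact sum_cnt c0
      obtain ⟨t, ht⟩ := h3
      have e01 := h0eq 0 1
      have e10 := h0eq 1 0
      have e12 := h0eq 1 2
      have e21 := h0eq 2 1
      have e02 := h0eq 0 2
      have e20 := h0eq 2 0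
      have heq2 : cnt c0 0 = cnt c0 1 ∧ cnt c0 1 = cnt c0 2 := by
        unfold cnt at *; omega
      have hbal : ∀ j, cnt c0 j = cnt c0 0 := by
        intro j
        fin_cases j
        · rfl
        · exact heq2.1.symm
        · exact (heq2.1.trans heq2.2).symm
      obtain ⟨c, b, hcp, hb⟩ := caseA G k c0 h0prop (cnt c0 0) hbal l
      exact ⟨c, hcp, fun i j => by show cnt c i ≤ cnt c j + 1; rw [hb i, hb j]; omega⟩
    · subst hk2
      obtain ⟨c, hcp, hce⟩ := caseB G c0 h0prop h0eq l
      exact ⟨c, hcp, hce⟩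
  have hlow : ∀ m, (coronaPow G (cycleGraph (2 * k)) l).EquitablyColorable m → 3 ≤ m := by
    rintro m ⟨c, hprop, -⟩
    obtain ⟨l', rfl⟩ : ∃ l', l = l' + 1 := ⟨l - 1, by omega⟩
    have hα : Nonempty α := by
      rw [← Fintype.card_pos_iff]; omega
    obtain ⟨a0⟩ := hα
    set x0 : coronaType α (Fin (2 * k)) l' := coronaBase (Fin (2 * k)) l' a0 with hx0
    have hprop' : ∀ ⦃u v : coronaType α (Fin (2 * k)) l' ⊕
          coronaType α (Fin (2 * k)) l' × Fin (2 * k)⦄,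
        ((coronaPow G (cycleGraph (2 * k)) l').corona (cycleGraph (2 * k))).Adj u v →
          c u ≠ c v := hprop
    have hpos0 : (0 : ℕ) < 2 * k := by omega
    have hpos1 : (1 : ℕ) < 2 * k := by omega
    set u0 : Fin (2 * k) := ⟨0, hpos0⟩
    set u1 : Fin (2 * k) := ⟨1, hpos1⟩
    have hadj01 : (cycleGraph (2 * k)).Adj u0 u1 := by
      rw [SimpleGraph.cycleGraph_adj']
      right
      show (u1 - u0).val = 1
      rw [Fin.sub_def]
      show (2 * k - 0 + 1) % (2 * k) = 1
      rw [Nat.mod_eq_sub_mod (by omega), Nat.mod_eq_of_lt (by omega)]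
      omega
    have hA : ((coronaPow G (cycleGraph (2 * k)) l').corona (cycleGraph (2 * k))).Adj
        (Sum.inl x0) (Sum.inr (x0, u0)) := rfl
    have hB : ((coronaPow G (cycleGraph (2 * k)) l').corona (cycleGraph (2 * k))).Adj
        (Sum.inl x0) (Sum.inr (x0, u1)) := rfl
    have hC : ((coronaPow G (cycleGraph (2 * k)) l').corona (cycleGraph (2 * k))).Adj
        (Sum.inr (x0, u0)) (Sum.inr (x0, u1)) := ⟨rfl, hadj01⟩
    have d1 := hprop' hA
    have d2 := hprop' hB
    have d3 := hprop' hC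
    have hcard : ({c (Sum.inl x0), c (Sum.inr (x0, u0)), c (Sum.inr (x0, u1))} :
        Finset (Fin m)).card = 3 := by
      rw [Finset.card_insert_of_notMem (by
          simp only [Finset.mem_insert, Finset.mem_singleton, not_or]
          exact ⟨d1, d2⟩),
        Finset.card_insert_of_notMem (by
          simp only [Finset.mem_singleton]
          exact d3),
        Finset.card_singleton]
    calc 3 = ({c (Sum.inl x0), c (Sum.inr (x0, u0)), c (Sum.inr (x0, u1))} :
          Finset (Fin m)).card := hcard.symm
      _ ≤ Fintype.card (Fin m) := Finset.card_le_univ _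
      _ = m := Fintype.card_fin m
  unfold SimpleGraph.equitableChromaticNumber
  refine le_antisymm (Nat.sInf_le hmem) (le_csInf ⟨3, hmem⟩ fun m hm => hlow m hm)
end
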